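/- Let π ∈ NC(k) with outer classes B_1, …, B_{o(π)}, listed in increasing order of minimal elements. Then the closures cl(B_1), …, cl(B_{o(π)}) are pairwise disjoint intervals of consecutive integers whose union is [k], and for every N ≥ 1 and every family x = (x_{i,j}), i ∈ [k], j ∈ [N], in a unital (not necessarily commutative) ring, Pr_π(x) = ∏_{i=1}^{o(π)} Pr_{π|cl(B_i)}(x|_{cl(B_i)}), the product taken in increasing order of i, where π|cl(B_i) is the restriction of π to cl(B_i). -/

import Mathlib

open scoped Classical

noncomputable section FreeStochasticMeasures

/-! ## Partitions of `Fin k` as setoids -/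

instance setoidFinFinite (k : ℕ) : Finite (Setoid (Fin k)) :=
  Finite.of_injective (fun π : Setoid (Fin k) => (π.r : Fin k → Fin k → Prop))
    (fun _ _ hab => Setoid.ext fun x y => iff_of_eq (congrFun (congrFun hab x) y))

instance setoidFinFintype (k : ℕ) : Fintype (Setoid (Fin k)) := Fintype.ofFinite _

/-- The classes of a partition of `Fin k`, as a finset of finsets. -/
def classesF {k : ℕ} (π : Setoid (Fin k)) : Finset (Finset (Fin k)) :=
  Finset.univ.image fun i => Finset.univ.filter fun j => π.r i j

/-- A partition `π` of `Fin k` is noncrossing: there are no `i < j < l < m` with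
`i ~π l`, `j ~π m` and `¬ i ~π j`. -/
def IsNC {k : ℕ} (π : Setoid (Fin k)) : Prop :=
  ∀ i j l m : Fin k, i < j → j < l → l < m → π.r i l → π.r j m → π.r i j

/-- `B` is a class of the partition `π`. -/
def IsClass {k : ℕ} (π : Setoid (Fin k)) (B : Finset (Fin k)) : Prop :=
  B ∈ classesF π

/-- `B` is an inner class of `π`: it is covered by some other class. -/
def IsInnerClass {k : ℕ} (π : Setoid (Fin k)) (B : Finset (Fin k)) : Prop :=
  IsClass π B ∧ ∃ B' : Finset (Fin k), IsClass π B' ∧ B' ≠ B ∧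
    ∃ a ∈ B', ∃ b ∈ B', ∀ c ∈ B, a < c ∧ c < b

/-- `B` is an outer class of `π`: a class which is not inner. -/
def IsOuterClass {k : ℕ} (π : Setoid (Fin k)) (B : Finset (Fin k)) : Prop :=
  IsClass π B ∧ ¬ IsInnerClass π B

/-- `Bf` enumerates the finsets satisfying `P` (e.g. the outer classes of a partition),
listed in increasing order of minimal elements. -/
def ClassEnum {k o : ℕ} (P : Finset (Fin k) → Prop) (Bf : Fin o → Finset (Fin k)) : Prop :=
  (∀ i, P (Bf i)) ∧ (∀ B, P B → ∃ i, Bf i = B) ∧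
    ∀ i j : Fin o, i < j → ∃ a ∈ Bf i, ∀ b ∈ Bf j, a < b

/-- The closure of a class: all indices lying between two of its elements. -/
def closureF {k : ℕ} (B : Finset (Fin k)) : Finset (Fin k) :=
  Finset.univ.filter fun j => ∃ a ∈ B, ∃ b ∈ B, a ≤ j ∧ j ≤ b

/-- Restriction of a partition of `Fin k` to a subset `C`, transported to `Fin C.card`
along the unique order isomorphism. -/
def restrictS {k : ℕ} (π : Setoid (Fin k)) (C : Finset (Fin k)) : Setoid (Fin C.card) :=
  Setoid.comap (fun i => (C.orderIsoOfFin rfl i).1) π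

/-- `μ` is the Möbius function of the poset `NC(k)` of noncrossing partitions of `Fin k`:
determined by `μ σ σ = 1` and the vanishing of the sums over intervals. -/
def IsNCMobius (k : ℕ) (μ : Setoid (Fin k) → Setoid (Fin k) → ℤ) : Prop :=
  (∀ σ : Setoid (Fin k), IsNC σ → μ σ σ = 1) ∧
    ∀ σ π : Setoid (Fin k), IsNC σ → IsNC π → σ < π →
      (∑ ρ ∈ Finset.univ.filter (fun ρ : Setoid (Fin k) => IsNC ρ ∧ σ ≤ ρ ∧ ρ ≤ π), μ σ ρ) = 0

/-- `μ` is the Möbius function of the lattice of all partitions of `Fin k`. -/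
def IsPMobius (k : ℕ) (μ : Setoid (Fin k) → Setoid (Fin k) → ℤ) : Prop :=
  (∀ σ : Setoid (Fin k), μ σ σ = 1) ∧
    ∀ σ π : Setoid (Fin k), σ < π →
      (∑ ρ ∈ Finset.univ.filter (fun ρ : Setoid (Fin k) => σ ≤ ρ ∧ ρ ≤ π), μ σ ρ) = 0

/-! ## Partition-indexed sums in a ring -/

section RingSums

variable {R : Type*} [Ring R]

/-- `St_π(x)`: sum over all `v` inducing exactly the partition `π`. -/
def StSumR {k N : ℕ} (x : Fin k → Fin N → R) (π : Setoid (Fin k)) : R :=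
  ∑ v ∈ Finset.univ.filter (fun v : Fin k → Fin N => ∀ i j, v i = v j ↔ π.r i j),
    (List.ofFn fun i => x i (v i)).prod

/-- `Pr_π(x)`: sum over all `v` constant on the classes of `π`. -/
def PrSumR {k N : ℕ} (x : Fin k → Fin N → R) (π : Setoid (Fin k)) : R :=
  ∑ v ∈ Finset.univ.filter (fun v : Fin k → Fin N => ∀ i j, π.r i j → v i = v j),
    (List.ofFn fun i => x i (v i)).prod

/-- Restriction of the family `x` to the rows indexed by `C`, in increasing order. -/
def restrictT {k N : ℕ} (x : Fin k → Fin N → R) (C : Finset (Fin k)) :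
    Fin C.card → Fin N → R := fun i => x (C.orderIsoOfFin rfl i).1

end RingSums

/-! ## C*-probability spaces, states, free independence -/

variable {A : Type*} [NormedRing A] [StarRing A] [CStarRing A] [NormedAlgebra ℂ A]
  [StarModule ℂ A] [CompleteSpace A]

/-- `φ` is a state: unital and positive. -/
structure IsCState (φ : A →ₗ[ℂ] ℂ) : Prop where
  map_one : φ 1 = 1
  pos : ∀ a : A, 0 ≤ (φ (star a * a)).re ∧ (φ (star a * a)).im = 0

/-- `φ` is a faithful tracial state. -/
structure IsFaithfulTracialState (φ : A →ₗ[ℂ] ℂ) : Prop where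
  map_one : φ 1 = 1
  pos : ∀ a : A, 0 ≤ (φ (star a * a)).re ∧ (φ (star a * a)).im = 0
  tracial : ∀ a b : A, φ (a * b) = φ (b * a)
  faithful : ∀ a : A, φ (star a * a) = 0 → a = 0

/-- Free independence of a family of subsets of `A` with respect to `φ`: alternating products
of centered elements of the generated unital star subalgebras are centered. -/
def FreelyIndependent (φ : A →ₗ[ℂ] ℂ) {ι : Type*} (S : ι → Set A) : Prop :=
  ∀ (m : ℕ) (idx : Fin (m + 1) → ι) (a : Fin (m + 1) → A),
    (∀ t, a t ∈ StarAlgebra.adjoin ℂ (S (idx t))) →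
    (∀ t : Fin m, idx t.castSucc ≠ idx t.succ) →
    (∀ t, φ (a t) = 0) →
    φ (List.ofFn a).prod = 0

/-- Free independence of two sets. -/
def FreelyIndependentPair (φ : A →ₗ[ℂ] ℂ) (S T : Set A) : Prop :=
  FreelyIndependent φ (fun b : Bool => cond b S T)

/-- A standard semicircular element. -/
def IsStdSemicircular (φ : A →ₗ[ℂ] ℂ) (s : A) : Prop :=
  star s = s ∧ (∀ m : ℕ, φ (s ^ (2 * m + 1)) = 0) ∧
    ∀ m : ℕ, φ (s ^ (2 * m)) = (catalan m : ℂ)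

/-! ## Moments and free cumulants -/

/-- The moment of the subfamily of `a` indexed by `B`, in increasing order. -/
def Mom {k : ℕ} (φ : A →ₗ[ℂ] ℂ) (a : Fin k → A) (B : Finset (Fin k)) : ℂ :=
  φ ((B.sort (· ≤ ·)).map a).prod

/-- `M_π(a)`: product of the moments over the classes of `π`. -/
def MomPi {k : ℕ} (φ : A →ₗ[ℂ] ℂ) (a : Fin k → A) (π : Setoid (Fin k)) : ℂ :=
  ∏ B ∈ classesF π, Mom φ a B

/-- `R_π(a)`: the free cumulant functional, via Möbius inversion over `NC(k)`
(`μ` is the Möbius function of `NC(k)`). -/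
def Rpi {k : ℕ} (φ : A →ₗ[ℂ] ℂ) (μ : Setoid (Fin k) → Setoid (Fin k) → ℤ)
    (a : Fin k → A) (π : Setoid (Fin k)) : ℂ :=
  ∑ σ ∈ Finset.univ.filter (fun σ : Setoid (Fin k) => IsNC σ ∧ σ ≤ π),
    (μ σ π : ℂ) * MomPi φ a σ

/-- `R(a_1, …, a_k)`: the free cumulant for the one-class partition. -/
def Rfull {k : ℕ} (φ : A →ₗ[ℂ] ℂ) (μ : Setoid (Fin k) → Setoid (Fin k) → ℤ)
    (a : Fin k → A) : ℂ :=
  Rpi φ μ a ⊤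

/-- The subfamily of operators indexed by `B`, in increasing order. -/
def subArgs {k : ℕ} (a : Fin k → A) (B : Finset (Fin k)) : Fin B.card → A :=
  fun i => a (B.orderIsoOfFin rfl i).1

/-! ## Half-open subintervals of `[0,1)` and subdivisions -/

/-- A half-open interval `[lo, hi) ⊆ [0,1)`. -/
structure HIv : Type where
  lo : ℝ
  hi : ℝ
  lo_nonneg : 0 ≤ lo
  lo_le_hi : lo ≤ hi
  hi_le_one : hi ≤ 1

namespace HIv

/-- The length of a half-open interval. -/
def len (I : HIv) : ℝ := I.hi - I.lo

/-- A half-open interval as a set of reals. -/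
def set (I : HIv) : Set ℝ := Set.Ico I.lo I.hi

end HIv

/-- The interval `[0,1)`. -/
def unitIv : HIv := ⟨0, 1, le_refl 0, zero_le_one, le_refl 1⟩

/-- A subdivision of the half-open interval `I` into finitely many half-open intervals,
listed in increasing order, recorded by its strictly increasing sequence of cut points. -/
structure SubdivOf (I : HIv) : Type where
  n : ℕ
  c : Fin (n + 1) → ℝ
  mono : StrictMono c
  first : c 0 = I.lo
  last : c (Fin.last n) = I.hi

namespace SubdivOf

/-- The `j`-th interval of a subdivision. -/
def piece {I : HIv} (S : SubdivOf I) (j : Fin S.n) : HIv where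
  lo := S.c j.castSucc
  hi := S.c j.succ
  lo_nonneg := by
    have h0 : S.c 0 ≤ S.c j.castSucc := S.mono.monotone (Fin.zero_le _)
    have h1 := I.lo_nonneg
    rw [S.first] at h0; linarith
  lo_le_hi := le_of_lt (S.mono Fin.castSucc_lt_succ)
  hi_le_one := by
    have h0 : S.c j.succ ≤ S.c (Fin.last S.n) := S.mono.monotone (Fin.le_last _)
    have h1 := I.hi_le_one
    rw [S.last] at h0; linarith

/-- The mesh of the subdivision is `< δ`: every piece has length `< δ`. -/
def MeshLT {I : HIv} (S : SubdivOf I) (δ : ℝ) : Prop :=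
  ∀ j : Fin S.n, (S.piece j).len < δ

end SubdivOf

/-- `L` is the operator-norm limit of `F` along the net of subdivisions of `I`
(as the mesh tends to `0`). -/
def IsSubdivLimit {I : HIv} (F : SubdivOf I → A) (L : A) : Prop :=
  ∀ ε : ℝ, 0 < ε → ∃ δ : ℝ, 0 < δ ∧ ∀ S : SubdivOf I, S.MeshLT δ → ‖F S - L‖ < ε

/-! ## Free stochastic measures -/

/-- A free stochastic measure on `(A, φ)`: a self-adjoint, uniformly bounded, additive,
stationary, continuous interval function with freely independent values on disjoint
intervals. -/
structure FSM (A : Type*) [NormedRing A] [StarRing A] [CStarRing A] [NormedAlgebra ℂ A]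
    [StarModule ℂ A] [CompleteSpace A] (φ : A →ₗ[ℂ] ℂ) : Type _ where
  val : HIv → A
  sa : ∀ I, star (val I) = val I
  bdd : ∃ C : ℝ, ∀ I, ‖val I‖ ≤ C
  add : ∀ I J K : HIv, I.hi = J.lo → K.lo = I.lo → K.hi = J.hi → val K = val I + val J
  free : ∀ {n : ℕ} (Iv : Fin n → HIv),
    (∀ i j, i ≠ j → Disjoint (Iv i).set (Iv j).set) →
    FreelyIndependent φ fun i => ({val (Iv i)} : Set A)
  stat : ∀ (m : ℕ) (I J : HIv), I.len = J.len → φ (val I ^ m) = φ (val J ^ m)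
  cont : ∀ (m : ℕ) (I : HIv) (ε : ℝ), 0 < ε → ∃ δ : ℝ, 0 < δ ∧
    ∀ J : HIv, |J.len - I.len| < δ → ‖φ (val J ^ m) - φ (val I ^ m)‖ < ε

/-- A `k`-tuple of free stochastic measures is consistent: joint free increments,
joint stationarity, and joint continuity. -/
def Consistent {k : ℕ} (φ : A →ₗ[ℂ] ℂ) (X : Fin k → FSM A φ) : Prop :=
  (∀ (n : ℕ) (u : Fin n → Fin k) (Iv : Fin n → HIv),
      (∀ i j, i ≠ j → Disjoint (Iv i).set (Iv j).set) →
      FreelyIndependent φ fun i => ({(X (u i)).val (Iv i)} : Set A)) ∧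
  (∀ (n : ℕ) (u : Fin n → Fin k) (I J : HIv), I.len = J.len →
      φ (List.ofFn fun i => (X (u i)).val I).prod
        = φ (List.ofFn fun i => (X (u i)).val J).prod) ∧
  (∀ (n : ℕ) (u : Fin n → Fin k) (I : HIv) (ε : ℝ), 0 < ε → ∃ δ : ℝ, 0 < δ ∧
      ∀ J : HIv, |J.len - I.len| < δ →
        ‖φ (List.ofFn fun i => (X (u i)).val J).prod
          - φ (List.ofFn fun i => (X (u i)).val I).prod‖ < ε)

/-! ## Riemann-type sums for stochastic measures -/

/-- `St_π(X, S)`: sum over multi-indices inducing exactly the partition `π`. -/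
def StSum {k : ℕ} (Xv : Fin k → HIv → A) (π : Setoid (Fin k)) {I : HIv}
    (S : SubdivOf I) : A :=
  ∑ v ∈ Finset.univ.filter (fun v : Fin k → Fin S.n => ∀ i j, v i = v j ↔ π.r i j),
    (List.ofFn fun i => Xv i (S.piece (v i))).prod

/-- `Pr_π(X, S)`: sum over multi-indices constant on the classes of `π`. -/
def PrSum {k : ℕ} (Xv : Fin k → HIv → A) (π : Setoid (Fin k)) {I : HIv}
    (S : SubdivOf I) : A :=
  ∑ v ∈ Finset.univ.filter (fun v : Fin k → Fin S.n => ∀ i j, π.r i j → v i = v j),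
    (List.ofFn fun i => Xv i (S.piece (v i))).prod

/-- The diagonal Riemann sum `Σ_j X^{(1)}(I_j) ⋯ X^{(k)}(I_j)`. -/
def diagSum {k : ℕ} (Xv : Fin k → HIv → A) {I : HIv} (S : SubdivOf I) : A :=
  ∑ j : Fin S.n, (List.ofFn fun i => Xv i (S.piece j)).prod

/-- The sub-tuple of interval functions indexed by `B`, in increasing order. -/
def subTupleV {k : ℕ} (Xv : Fin k → HIv → A) (B : Finset (Fin k)) :
    Fin B.card → HIv → A := fun i => Xv (B.orderIsoOfFin rfl i).1

/-- The alternating product `p Z_1 p Z_2 p ⋯ Z_k p`. -/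
def altProd {k : ℕ} (p : A) (Z : Fin k → A) : A :=
  p * (List.ofFn fun j => Z j * p).prod

/-- Lengths of the intersection `∩_{i ∈ G} I_i` of half-open intervals. -/
def interLen {n : ℕ} (Iv : Fin n → HIv) (G : Finset (Fin n)) : ℝ :=
  if h : G.Nonempty then
    max 0 ((G.inf' h fun i => (Iv i).hi) - (G.sup' h fun i => (Iv i).lo))
  else 0

/-- A free Poisson stochastic measure: all free cumulants of `Y(I)` equal `|I|`
(`μ` is a family of Möbius functions of the posets `NC(n)`). -/
def IsFreePoisson (φ : A →ₗ[ℂ] ℂ) (Y : FSM A φ)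
    (μ : (n : ℕ) → Setoid (Fin n) → Setoid (Fin n) → ℤ) : Prop :=
  ∀ n : ℕ, 1 ≤ n → ∀ I : HIv, Rfull φ (μ n) (fun _ : Fin n => Y.val I) = (I.len : ℂ)

end FreeStochasticMeasures
section MyAuxCombinatorics

variable {k : ℕ} {π : Setoid (Fin k)}

lemma myCls_isClass (π : Setoid (Fin k)) (i : Fin k) :
    IsClass π (Finset.univ.filter fun j => π.r i j) :=
  Finset.mem_image.2 ⟨i, Finset.mem_univ i, rfl⟩

lemma myMem_cls (π : Setoid (Fin k)) (i : Fin k) :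
    i ∈ Finset.univ.filter fun j => π.r i j := by
  simp only [Finset.mem_filter, Finset.mem_univ, true_and]
  exact π.iseqv.refl i

lemma myClass_eq {B : Finset (Fin k)} (hB : IsClass π B) {a : Fin k} (ha : a ∈ B) :
    B = Finset.univ.filter fun j => π.r a j := by
  obtain ⟨i, -, rfl⟩ := Finset.mem_image.1 hB
  have hia : π.r i a := by simpa using ha
  ext j
  simp only [Finset.mem_filter, Finset.mem_univ, true_and]
  exact ⟨fun h => π.iseqv.trans (π.iseqv.symm hia) h, fun h => π.iseqv.trans hia h⟩

lemma myClass_nonempty {B : Finset (Fin k)} (hB : IsClass π B) : B.Nonempty := by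
  obtain ⟨i, -, rfl⟩ := Finset.mem_image.1 hB
  exact ⟨i, myMem_cls π i⟩

lemma myRel_of_mem {B : Finset (Fin k)} (hB : IsClass π B) {a b : Fin k}
    (ha : a ∈ B) (hb : b ∈ B) : π.r a b := by
  rw [myClass_eq hB ha] at hb; simpa using hb

lemma myMem_of_rel {B : Finset (Fin k)} (hB : IsClass π B) {a b : Fin k}
    (ha : a ∈ B) (hab : π.r a b) : b ∈ B := by
  rw [myClass_eq hB ha]; simpa using hab

lemma myClass_eq_class {B B' : Finset (Fin k)} (hB : IsClass π B) (hB' : IsClass π B')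
    {a : Fin k} (ha : a ∈ B) (ha' : a ∈ B') : B = B' := by
  rw [myClass_eq hB ha, myClass_eq hB' ha']

lemma myMem_closure {B : Finset (Fin k)} {j : Fin k} :
    j ∈ closureF B ↔ ∃ a ∈ B, ∃ b ∈ B, a ≤ j ∧ j ≤ b := by
  simp [closureF]

lemma mySelf_mem_closure {B : Finset (Fin k)} {a : Fin k} (ha : a ∈ B) : a ∈ closureF B :=
  myMem_closure.2 ⟨a, ha, a, ha, le_refl a, le_refl a⟩

lemma myClosure_eq_Icc {B : Finset (Fin k)} (h : B.Nonempty) :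
    closureF B = Finset.Icc (B.min' h) (B.max' h) := by
  ext j
  rw [myMem_closure, Finset.mem_Icc]
  constructor
  · rintro ⟨a, ha, b, hb, h1, h2⟩
    exact ⟨le_trans (B.min'_le a ha) h1, le_trans h2 (B.le_max' b hb)⟩
  · rintro ⟨h1, h2⟩
    exact ⟨_, B.min'_mem h, _, B.max'_mem h, h1, h2⟩

lemma myNested (hπ : IsNC π) {B B' : Finset (Fin k)} (hB : IsClass π B) (hB' : IsClass π B')
    (hne : B ≠ B') (hBne : B.Nonempty) (hB'ne : B'.Nonempty)
    (h1 : B.min' hBne < B'.min' hB'ne) (h2 : B'.min' hB'ne ≤ B.max' hBne) :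
    ∀ c ∈ B', B.min' hBne < c ∧ c < B.max' hBne := by
  intro c hc
  have hminB := B.min'_mem hBne
  have hmaxB := B.max'_mem hBne
  have hminB' := B'.min'_mem hB'ne
  have hac : B.min' hBne < c := lt_of_lt_of_le h1 (B'.min'_le c hc)
  refine ⟨hac, ?_⟩
  by_contra hcb
  push_neg at hcb
  have hlt2 : B'.min' hB'ne < B.max' hBne := by
    rcases lt_or_eq_of_le h2 with h | h
    · exact h
    · refine absurd (myClass_eq_class hB' hB ?_ hmaxB).symm hne
      rw [← h]; exact hminB'
  have hbc : B.max' hBne < c := by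
    rcases lt_or_eq_of_le hcb with h | h
    · exact h
    · refine absurd (myClass_eq_class hB hB' ?_ hc) hne
      rw [← h]; exact hmaxB
  have hrel := hπ (B.min' hBne) (B'.min' hB'ne) (B.max' hBne) c h1 hlt2 hbc
      (myRel_of_mem hB hminB hmaxB) (myRel_of_mem hB' hminB' hc)
  exact hne (myClass_eq_class hB hB' hminB (myMem_of_rel hB' hminB' (π.iseqv.symm hrel)))

lemma myInner (hπ : IsNC π) {B B' : Finset (Fin k)} (hB : IsClass π B) (hB' : IsClass π B')
    (hne : B ≠ B') (hBne : B.Nonempty) (hB'ne : B'.Nonempty)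
    (h1 : B.min' hBne < B'.min' hB'ne) (h2 : B'.min' hB'ne ≤ B.max' hBne) :
    IsInnerClass π B' :=
  ⟨hB', B, hB, hne, B.min' hBne, B.min'_mem hBne, B.max' hBne, B.max'_mem hBne,
    myNested hπ hB hB' hne hBne hB'ne h1 h2⟩

lemma myOuterDisj (hπ : IsNC π) {B B' : Finset (Fin k)}
    (hB : IsOuterClass π B) (hB' : IsOuterClass π B') (hne : B ≠ B') :
    Disjoint (closureF B) (closureF B') := by
  have hBne := myClass_nonempty hB.1
  have hB'ne := myClass_nonempty hB'.1
  rw [Finset.disjoint_left]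
  intro c hcB hcB'
  rw [myClosure_eq_Icc hBne, Finset.mem_Icc] at hcB
  rw [myClosure_eq_Icc hB'ne, Finset.mem_Icc] at hcB'
  rcases lt_trichotomy (B.min' hBne) (B'.min' hB'ne) with h | h | h
  · exact hB'.2 (myInner hπ hB.1 hB'.1 hne hBne hB'ne h (le_trans hcB'.1 hcB.2))
  · refine hne (myClass_eq_class hB.1 hB'.1 (B.min'_mem hBne) ?_)
    rw [h]; exact B'.min'_mem hB'ne
  · exact hB.2 (myInner hπ hB'.1 hB.1 (Ne.symm hne) hB'ne hBne h (le_trans hcB.1 hcB'.2))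

lemma myExistsOuterAux (hπ : IsNC π) :
    ∀ (n : ℕ) (B : Finset (Fin k)) (hB : IsClass π B),
      k - ((B.max' (myClass_nonempty hB)).val - (B.min' (myClass_nonempty hB)).val) ≤ n →
      ∃ O, IsOuterClass π O ∧ ∀ c ∈ B, c ∈ closureF O := by
  intro n
  induction n with
  | zero =>
    intro B hB hle
    have h1 : (B.max' (myClass_nonempty hB)).val < k := (B.max' (myClass_nonempty hB)).isLt
    omega
  | succ n ih =>
    intro B hB hle
    by_cases hO : IsOuterClass π B
    · exact ⟨B, hO, fun c hc => mySelf_mem_closure hc⟩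
    · have hinner : IsInnerClass π B := by
        by_contra h
        exact hO ⟨hB, h⟩
      obtain ⟨-, B', hB', hne, a, haB', b, hbB', hab⟩ := hinner
      have hBne := myClass_nonempty hB
      have hB'ne := myClass_nonempty hB'
      have hamin : a.val < (B.min' hBne).val := (hab _ (B.min'_mem hBne)).1
      have hmaxb : (B.max' hBne).val < b.val := (hab _ (B.max'_mem hBne)).2
      have h1 : (B'.min' hB'ne).val ≤ a.val := B'.min'_le a haB'
      have h2 : b.val ≤ (B'.max' hB'ne).val := B'.le_max' b hbB'
      have h3 : (B.min' hBne).val ≤ (B.max' hBne).val := B.min'_le _ (B.max'_mem hBne)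
      have h4 : (B'.max' hB'ne).val < k := (B'.max' hB'ne).isLt
      have hmeas : k - ((B'.max' (myClass_nonempty hB')).val - (B'.min' (myClass_nonempty hB')).val) ≤ n := by
        omega
      obtain ⟨O, hOouter, hOsub⟩ := ih B' hB' hmeas
      refine ⟨O, hOouter, fun c hc => ?_⟩
      obtain ⟨p, hp, q, hq, hpa, -⟩ := myMem_closure.1 (hOsub a haB')
      obtain ⟨p', hp', q', hq', -, hbq'⟩ := myMem_closure.1 (hOsub b hbB')
      exact myMem_closure.2 ⟨p, hp, q', hq',
        le_trans hpa (le_of_lt (hab c hc).1), le_trans (le_of_lt (hab c hc).2) hbq'⟩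

lemma myExistsOuter (hπ : IsNC π) (B : Finset (Fin k)) (hB : IsClass π B) :
    ∃ O, IsOuterClass π O ∧ ∀ c ∈ B, c ∈ closureF O :=
  myExistsOuterAux hπ k B hB (Nat.sub_le _ _)

end MyAuxCombinatorics
section MyAuxRing

variable {R : Type*} [Ring R]

/-- Shift embedding `Fin (k-d) → Fin k`. -/
def myShift (d k : ℕ) (hd : d ≤ k) (i : Fin (k - d)) : Fin k :=
  ⟨d + i.val, by omega⟩

lemma myShift_strictMono {d k : ℕ} {hd : d ≤ k} : StrictMono (myShift d k hd) := by
  intro a b h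
  simp only [Fin.lt_def, myShift] at *
  omega

lemma myOfFn_prod_split {M : Type*} [Monoid M] {k : ℕ} (d : ℕ) (hd : d ≤ k) (g : Fin k → M) :
    (List.ofFn g).prod
      = (List.ofFn fun i : Fin d => g (Fin.castLE hd i)).prod
        * (List.ofFn fun i : Fin (k - d) => g (myShift d k hd i)).prod := by
  have h : k = d + (k - d) := by omega
  rw [List.ofFn_congr h g, List.ofFn_add, List.prod_append]
  have e1 : (fun i : Fin d => g (Fin.cast h.symm (Fin.castLE (Nat.le_add_right d (k - d)) i)))
      = fun i : Fin d => g (Fin.castLE hd i) := by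
    funext i; rfl
  have e2 : (fun i : Fin (k - d) => g (Fin.cast h.symm (Fin.natAdd d i)))
      = fun i : Fin (k - d) => g (myShift d k hd i) := by
    funext i; rfl
  rw [e1, e2]

lemma myPrSumR_reindex {c c' N : ℕ} (h : c = c') (y : Fin c' → Fin N → R)
    (σ : Setoid (Fin c')) :
    PrSumR (fun j : Fin c => y (Fin.cast h j)) (Setoid.comap (Fin.cast h) σ) = PrSumR y σ := by
  subst h
  have h1 : (fun j : Fin c => y (Fin.cast rfl j)) = y := rfl
  have h2 : Setoid.comap (Fin.cast rfl) σ = σ := Setoid.ext fun _ _ => Iff.rfl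
  rw [h1, h2]

lemma myRestrict_eq {k : ℕ} (C : Finset (Fin k)) (f : Fin C.card → Fin k)
    (hmem : ∀ i, f i ∈ C) (hmono : StrictMono f) :
    (fun i => ((C.orderIsoOfFin rfl i : Fin k))) = f := by
  have h := Finset.orderEmbOfFin_unique (rfl : C.card = C.card) hmem hmono
  funext i
  rw [Finset.coe_orderIsoOfFin_apply, h]

lemma myRestrictT_eq {k N : ℕ} (x : Fin k → Fin N → R) (C : Finset (Fin k))
    (f : Fin C.card → Fin k) (hmem : ∀ i, f i ∈ C) (hmono : StrictMono f) :
    restrictT x C = fun i => x (f i) := by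
  have h := myRestrict_eq C f hmem hmono
  funext i
  show x ((C.orderIsoOfFin rfl i : Fin k)) = x (f i)
  rw [congrFun h i]

lemma myRestrictS_eq {k : ℕ} (π : Setoid (Fin k)) (C : Finset (Fin k))
    (f : Fin C.card → Fin k) (hmem : ∀ i, f i ∈ C) (hmono : StrictMono f) :
    restrictS π C = Setoid.comap f π := by
  rw [restrictS, myRestrict_eq C f hmem hmono]

set_option maxHeartbeats 1000000 in
lemma mySplit {k N : ℕ} (d : ℕ) (hd : d ≤ k) (π : Setoid (Fin k))
    (hsep : ∀ a b : Fin k, π.r a b → (a.val < d ↔ b.val < d)) (x : Fin k → Fin N → R) :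
    PrSumR x π
      = PrSumR (fun i : Fin d => x (Fin.castLE hd i)) (Setoid.comap (Fin.castLE hd) π)
        * PrSumR (fun i => x (myShift d k hd i)) (Setoid.comap (myShift d k hd) π) := by
  rw [PrSumR, PrSumR, PrSumR, Finset.sum_mul_sum, ← Finset.sum_product']
  refine Finset.sum_nbij'
    (i := fun v => (fun i => v (Fin.castLE hd i), fun i => v (myShift d k hd i)))
    (j := fun p => fun a : Fin k =>
      if h : a.val < d then p.1 ⟨a.val, h⟩ else p.2 ⟨a.val - d, by omega⟩)
    ?_ ?_ ?_ ?_ ?_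
  · intro v hv
    simp only [Finset.mem_filter, Finset.mem_univ, true_and] at hv
    simp only [Finset.mem_product, Finset.mem_filter, Finset.mem_univ, true_and]
    exact ⟨fun i j h => hv _ _ h, fun i j h => hv _ _ h⟩
  · intro p hp
    simp only [Finset.mem_product, Finset.mem_filter, Finset.mem_univ, true_and] at hp
    simp only [Finset.mem_filter, Finset.mem_univ, true_and]
    intro a b hab
    by_cases ha : a.val < d
    · have hb : b.val < d := (hsep a b hab).1 ha
      rw [dif_pos ha, dif_pos hb]
      exact hp.1 _ _ hab
    · have hb : ¬ b.val < d := fun h => ha ((hsep a b hab).2 h)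
      rw [dif_neg ha, dif_neg hb]
      have ea : myShift d k hd ⟨a.val - d, by omega⟩ = a := Fin.ext (by simp [myShift]; omega)
      have eb : myShift d k hd ⟨b.val - d, by omega⟩ = b := Fin.ext (by simp [myShift]; omega)
      have hrel : π.r (myShift d k hd ⟨a.val - d, by omega⟩)
          (myShift d k hd ⟨b.val - d, by omega⟩) := by rw [ea, eb]; exact hab
      exact hp.2 ⟨a.val - d, by omega⟩ ⟨b.val - d, by omega⟩ hrel
  · intro v hv
    funext a
    dsimp only
    by_cases h : a.val < d
    · rw [dif_pos h]
      congr 1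
    · rw [dif_neg h]
      congr 1
      exact Fin.ext (by simp [myShift]; omega)
  · intro p hp
    refine Prod.ext ?_ ?_
    · funext i
      show (if h : (Fin.castLE hd i).val < d then _ else _) = p.1 i
      rw [dif_pos (show (Fin.castLE hd i).val < d from i.isLt)]
      congr 1
    · funext i
      show (if h : (myShift d k hd i).val < d then _ else _) = p.2 i
      rw [dif_neg (show ¬ (myShift d k hd i).val < d by simp [myShift])]
      congr 1
      exact Fin.ext (by simp [myShift])
  · intro v hv
    exact myOfFn_prod_split d hd fun a => x a (v a)

end MyAuxRing
set_option maxHeartbeats 1000000 in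
lemma myAuxFactor {R : Type*} [Ring R] :
    ∀ (o k : ℕ) (π : Setoid (Fin k)) (C : Fin o → Finset (Fin k)),
      (∀ i j : Fin o, i < j → ∀ a ∈ C i, ∀ b ∈ C j, a < b) →
      (∀ a : Fin k, ∃ i, a ∈ C i) →
      (∀ (i : Fin o) (a b : Fin k), a ∈ C i → π.r a b → b ∈ C i) →
      ∀ (N : ℕ) (x : Fin k → Fin N → R),
        PrSumR x π = (List.ofFn fun i : Fin o =>
          PrSumR (restrictT x (C i)) (restrictS π (C i))).prod := by
  intro o
  induction o with
  | zero =>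
    intro k π C hord hcover hclass N x
    have hk : k = 0 := by
      by_contra h
      obtain ⟨i, -⟩ := hcover ⟨0, Nat.pos_of_ne_zero h⟩
      exact i.elim0
    subst hk
    rw [List.ofFn_zero, List.prod_nil, PrSumR]
    have hfil : (Finset.univ.filter
        (fun v : Fin 0 → Fin N => ∀ i j, π.r i j → v i = v j)) = Finset.univ :=
      Finset.filter_true_of_mem fun v _ i => i.elim0
    rw [hfil]
    calc ∑ v ∈ (Finset.univ : Finset (Fin 0 → Fin N)),
            (List.ofFn fun i : Fin 0 => x i (v i)).prod
        = ∑ _v ∈ (Finset.univ : Finset (Fin 0 → Fin N)), (1 : R) :=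
          Finset.sum_congr rfl (fun v _ => by simp)
      _ = 1 := by simp
  | succ n ih =>
    intro k π C hord hcover hclass N x
    have hd : (C 0).card ≤ k := by
      simpa using Finset.card_le_univ (C 0)
    have hlow : ∀ a b : Fin k, a ∈ C 0 → b ≤ a → b ∈ C 0 := by
      intro a b ha hba
      obtain ⟨i, hi⟩ := hcover b
      rcases eq_or_ne i 0 with h0 | h0
      · rwa [h0] at hi
      · exact absurd (hord 0 i (Fin.pos_of_ne_zero h0) a ha b hi) (not_lt.2 hba)
    have hC0 : ∀ a : Fin k, a ∈ C 0 ↔ a.val < (C 0).card := by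
      intro a
      constructor
      · intro ha
        have hsub : Finset.Iic a ⊆ C 0 := fun b hb => hlow a b ha (Finset.mem_Iic.1 hb)
        have hcard := Finset.card_le_card hsub
        rw [Fin.card_Iic] at hcard
        omega
      · intro ha
        by_contra hnot
        have hsub : C 0 ⊆ Finset.Iio a := by
          intro b hb
          rw [Finset.mem_Iio]
          by_contra hba
          push_neg at hba
          exact hnot (hlow b a hb hba)
        have hcard := Finset.card_le_card hsub
        rw [Fin.card_Iio] at hcard
        omega
    have hsep : ∀ a b : Fin k, π.r a b → (a.val < (C 0).card ↔ b.val < (C 0).card) := by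
      intro a b hab
      rw [← hC0 a, ← hC0 b]
      exact ⟨fun h => hclass 0 a b h hab, fun h => hclass 0 b a h (π.iseqv.symm hab)⟩
    rw [mySplit (C 0).card hd π hsep x]
    -- left factor
    have hmemL : ∀ i : Fin (C 0).card, Fin.castLE hd i ∈ C 0 := fun i => (hC0 _).2 i.isLt
    have hmonoL : StrictMono (Fin.castLE hd) := fun a b h => h
    rw [← myRestrictT_eq x (C 0) (Fin.castLE hd) hmemL hmonoL,
        ← myRestrictS_eq π (C 0) (Fin.castLE hd) hmemL hmonoL]
    -- right factor via IH
    have hIH := ih (k - (C 0).card) (Setoid.comap (myShift (C 0).card k hd) π)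
      (fun i => Finset.univ.filter fun a => myShift (C 0).card k hd a ∈ C i.succ)
      (by
        intro i j hij a ha b hb
        simp only [Finset.mem_filter, Finset.mem_univ, true_and] at ha hb
        have := hord i.succ j.succ (Fin.succ_lt_succ_iff.2 hij) _ ha _ hb
        simp only [Fin.lt_def, myShift] at this ⊢
        omega)
      (by
        intro a
        obtain ⟨i, hi⟩ := hcover (myShift (C 0).card k hd a)
        have h0 : i ≠ 0 := by
          intro h0
          rw [h0, hC0] at hi
          simp only [myShift] at hi
          omega
        obtain ⟨j, rfl⟩ := Fin.eq_succ_of_ne_zero h0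
        exact ⟨j, by simpa using hi⟩)
      (by
        intro i a b ha hab
        simp only [Finset.mem_filter, Finset.mem_univ, true_and] at ha ⊢
        exact hclass i.succ _ _ ha hab)
      N (fun i => x (myShift (C 0).card k hd i))
    rw [hIH, List.ofFn_succ, List.prod_cons]
    congr 1
    refine congrArg List.prod (congrArg List.ofFn (funext fun i => ?_))
    -- factor equality for block i.succ
    have himg : C i.succ = (Finset.univ.filter
        fun a : Fin (k - (C 0).card) => myShift (C 0).card k hd a ∈ C i.succ).image
          (myShift (C 0).card k hd) := by
      ext b
      simp only [Finset.mem_image, Finset.mem_filter, Finset.mem_univ, true_and]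
      constructor
      · intro hb
        have hbd : ¬ b.val < (C 0).card := by
          intro hlt
          exact absurd (hord 0 i.succ (Fin.succ_pos i) b ((hC0 b).2 hlt) b hb) (lt_irrefl b)
        have hble : b.val - (C 0).card < k - (C 0).card := by omega
        have heq : myShift (C 0).card k hd ⟨b.val - (C 0).card, hble⟩ = b :=
          Fin.ext (by simp [myShift]; omega)
        exact ⟨⟨b.val - (C 0).card, hble⟩, by rw [heq]; exact hb, heq⟩
      · rintro ⟨a, ha, rfl⟩
        exact ha
    set C' : Finset (Fin (k - (C 0).card)) := Finset.univ.filter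
        fun a : Fin (k - (C 0).card) => myShift (C 0).card k hd a ∈ C i.succ with hC'
    have hinj : Function.Injective (myShift (C 0).card k hd) := myShift_strictMono.injective
    have hcard : (C i.succ).card = C'.card := by
      rw [himg, Finset.card_image_of_injective _ hinj]
    have hemem : ∀ j, (C'.orderEmbOfFin rfl j : Fin (k - (C 0).card)) ∈ C' :=
      fun j => Finset.orderEmbOfFin_mem C' rfl j
    have hemono : StrictMono (C'.orderEmbOfFin rfl) := (C'.orderEmbOfFin rfl).strictMono
    set f : Fin (C i.succ).card → Fin k :=
      fun j => myShift (C 0).card k hd (C'.orderEmbOfFin rfl (Fin.cast hcard j)) with hf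
    have hfmem : ∀ j, f j ∈ C i.succ := by
      intro j
      rw [himg]
      exact Finset.mem_image_of_mem _ (hemem _)
    have hfmono : StrictMono f := by
      intro a b h
      exact myShift_strictMono (hemono h)
    rw [myRestrictT_eq x (C i.succ) f hfmem hfmono,
        myRestrictS_eq π (C i.succ) f hfmem hfmono,
        myRestrictT_eq (fun j => x (myShift (C 0).card k hd j)) C'
          (fun j => C'.orderEmbOfFin rfl j) hemem hemono,
        myRestrictS_eq (Setoid.comap (myShift (C 0).card k hd) π) C'
          (fun j => C'.orderEmbOfFin rfl j) hemem hemono]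
    have hcomp : Setoid.comap f π = Setoid.comap (Fin.cast hcard)
        (Setoid.comap (fun j => (C'.orderEmbOfFin rfl j : Fin (k - (C 0).card)))
          (Setoid.comap (myShift (C 0).card k hd) π)) :=
      Setoid.ext fun a b => Iff.rfl
    rw [hcomp]
    exact (myPrSumR_reindex hcard
      (fun j => x (myShift (C 0).card k hd (C'.orderEmbOfFin rfl j)))
      (Setoid.comap (fun j => (C'.orderEmbOfFin rfl j : Fin (k - (C 0).card)))
        (Setoid.comap (myShift (C 0).card k hd) π))).symm
/-- For `π ∈ NC(k)` with outer classes `B_1, …, B_o` (in increasing order of minimal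
elements), the closures `cl(B_i)` are pairwise disjoint intervals of consecutive integers
whose union is `[k]`, and `Pr_π(x) = ∏_i Pr_{π|cl(B_i)}(x|_{cl(B_i)})`. -/
theorem prsum_factorizes_over_outer_closures
    {R : Type*} [Ring R] (k o : ℕ) (hk : 1 ≤ k)
    (π : Setoid (Fin k)) (hπ : IsNC π)
    (Bf : Fin o → Finset (Fin k)) (hBf : ClassEnum (IsOuterClass π) Bf) :
    (∀ i j : Fin o, i ≠ j → Disjoint (closureF (Bf i)) (closureF (Bf j))) ∧
    (∀ i : Fin o, ∃ lo hi : Fin k, closureF (Bf i) = Finset.Icc lo hi) ∧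
    (Finset.univ.biUnion fun i => closureF (Bf i)) = Finset.univ ∧
    (∀ (N : ℕ), 1 ≤ N → ∀ x : Fin k → Fin N → R,
      PrSumR x π = (List.ofFn fun i : Fin o =>
        PrSumR (restrictT x (closureF (Bf i))) (restrictS π (closureF (Bf i)))).prod) := by
  obtain ⟨hBfouter, hBfsurj, hBford⟩ := hBf
  have hBfne : ∀ i j : Fin o, i ≠ j → Bf i ≠ Bf j := by
    intro i j hij
    rcases hij.lt_or_gt with h | h
    · obtain ⟨a, ha, hlt⟩ := hBford i j h
      intro he
      rw [he] at ha
      exact absurd (hlt a ha) (lt_irrefl a)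
    · obtain ⟨a, ha, hlt⟩ := hBford j i h
      intro he
      rw [← he] at ha
      exact absurd (hlt a ha) (lt_irrefl a)
  have hdisj : ∀ i j : Fin o, i ≠ j → Disjoint (closureF (Bf i)) (closureF (Bf j)) :=
    fun i j hij => myOuterDisj hπ (hBfouter i) (hBfouter j) (hBfne i j hij)
  have hcover : ∀ c : Fin k, ∃ i, c ∈ closureF (Bf i) := by
    intro c
    obtain ⟨O, hO, hsub⟩ := myExistsOuter hπ _ (myCls_isClass π c)
    obtain ⟨i, hi⟩ := hBfsurj O hO
    refine ⟨i, ?_⟩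
    rw [hi]
    exact hsub c (myMem_cls π c)
  have hclass : ∀ (i : Fin o) (a b : Fin k), a ∈ closureF (Bf i) → π.r a b →
      b ∈ closureF (Bf i) := by
    intro i a b ha hab
    obtain ⟨O, hO, hsub⟩ := myExistsOuter hπ _ (myCls_isClass π a)
    obtain ⟨j, hj⟩ := hBfsurj O hO
    have haO : a ∈ closureF (Bf j) := by rw [hj]; exact hsub a (myMem_cls π a)
    have hbO : b ∈ closureF (Bf j) := by
      rw [hj]
      refine hsub b ?_
      simp only [Finset.mem_filter, Finset.mem_univ, true_and]
      exact hab
    by_cases hij : i = j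
    · rw [hij]; exact hbO
    · exact absurd haO (Finset.disjoint_left.1 (hdisj i j hij) ha)
  have hord : ∀ i j : Fin o, i < j → ∀ a ∈ closureF (Bf i), ∀ b ∈ closureF (Bf j), a < b := by
    intro i j hij a ha b hb
    obtain ⟨p, hp, hplt⟩ := hBford i j hij
    have hne_i := myClass_nonempty (hBfouter i).1
    have hne_j := myClass_nonempty (hBfouter j).1
    rw [myClosure_eq_Icc hne_i, Finset.mem_Icc] at ha
    rw [myClosure_eq_Icc hne_j, Finset.mem_Icc] at hb
    have h1 : (Bf i).min' hne_i ≤ p := (Bf i).min'_le p hp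
    have h2 : p < (Bf j).min' hne_j := hplt _ ((Bf j).min'_mem hne_j)
    have h3 : (Bf i).max' hne_i < (Bf j).min' hne_j := by
      by_contra hcon
      push_neg at hcon
      have hm1 : (Bf j).min' hne_j ∈ closureF (Bf i) := by
        rw [myClosure_eq_Icc hne_i, Finset.mem_Icc]
        exact ⟨le_of_lt (lt_of_le_of_lt h1 h2), hcon⟩
      have hm2 : (Bf j).min' hne_j ∈ closureF (Bf j) := by
        rw [myClosure_eq_Icc hne_j, Finset.mem_Icc]
        exact ⟨le_rfl, (Bf j).min'_le _ ((Bf j).max'_mem hne_j)⟩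
      exact absurd hm2 (Finset.disjoint_left.1 (hdisj i j (Fin.ne_of_lt hij)) hm1)
    exact lt_of_le_of_lt ha.2 (lt_of_lt_of_le h3 hb.1)
  refine ⟨hdisj, ?_, ?_, ?_⟩
  · intro i
    have hne := myClass_nonempty (hBfouter i).1
    exact ⟨(Bf i).min' hne, (Bf i).max' hne, myClosure_eq_Icc hne⟩
  · apply Finset.eq_univ_iff_forall.2
    intro c
    obtain ⟨i, hi⟩ := hcover c
    exact Finset.mem_biUnion.2 ⟨i, Finset.mem_univ i, hi⟩
  · intro N _ x
    exact myAuxFactor o k π (fun i => closureF (Bf i)) hord hcover hclass N x
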